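/- Consistency of the group-averaging denoiser: under the assumptions of finite X, bounded noisy labels ỹ ∈ [a,b], and zero-mean noise E[ỹ|y] = y, the denoised label dn(x_i, ỹ_i; D̃_n) converges in probability to the true soft label y_i as the dataset size n → ∞. -/

import Mathlib

open MeasureTheory ProbabilityTheory Finset Filter

/-- Consistency of the group-averaging denoiser: for i.i.d.
samples `(x j, ỹ j)` with finite feature space `X`, bounded noisy labels
`ỹ j ∈ [a,b]` whose conditional mean given the feature is the deterministic
soft label `f (x j)` (zero-mean noise), and every feature value having
positive probability, the denoised label
`dn(x 0, ỹ 0; D̃_n) = (Σ_{j ≤ n} 1{x j = x 0} ỹ j) / (Σ_{j ≤ n} 1{x j = x 0})`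
converges in probability to the true soft label `f (x 0)` as `n → ∞`. -/
theorem consistency_group_averaging_denoiser
    {Ω X : Type*} [MeasurableSpace Ω] [MeasurableSpace X]
    [MeasurableSingletonClass X] [Fintype X] [DecidableEq X]
    (μ : Measure Ω) [IsProbabilityMeasure μ]
    (f : X → ℝ) (x : ℕ → Ω → X) (ynoisy : ℕ → Ω → ℝ)
    (a b : ℝ) (hab : a ≤ b)
    (hmeas : ∀ j, Measurable (fun ω => (x j ω, ynoisy j ω)))
    (hrange : ∀ j ω, ynoisy j ω ∈ Set.Icc a b)
    (hindep : iIndepFun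
        (fun j ω => (x j ω, ynoisy j ω)) μ)
    (hident : ∀ j, μ.map (fun ω => (x j ω, ynoisy j ω))
        = μ.map (fun ω => (x 0 ω, ynoisy 0 ω)))
    (hmean : ∀ j, (fun ω => f (x j ω))
        =ᵐ[μ] μ[ynoisy j | MeasurableSpace.comap (x j) inferInstance])
    (hsupp : ∀ v : X, μ {ω | x 0 ω = v} ≠ 0) :
    ∀ ε > (0 : ℝ),
      Tendsto (fun n : ℕ =>
          μ {ω | ε <
              |(∑ j ∈ Finset.range (n + 1),
                    (if x j ω = x 0 ω then ynoisy j ω else 0))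
                  / (∑ j ∈ Finset.range (n + 1),
                    (if x j ω = x 0 ω then (1 : ℝ) else 0))
                - f (x 0 ω)|})
        atTop (nhds 0) := by
  classical
  have hx : ∀ j, Measurable (x j) := fun j => (measurable_fst.comp (hmeas j))
  have hy : ∀ j, Measurable (ynoisy j) := fun j => (measurable_snd.comp (hmeas j))
  set M : ℝ := max |a| |b| with hM
  have hMnn : 0 ≤ M := le_trans (abs_nonneg a) (le_max_left _ _)
  have hbound : ∀ j ω, |ynoisy j ω| ≤ M := by
    intro j ω
    obtain ⟨h1, h2⟩ := hrange j ω
    rcases abs_le.mp (le_refl |a|) with _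
    refine abs_le.mpr ⟨?_, ?_⟩
    · have : -|a| ≤ a := neg_abs_le a
      linarith [le_max_left |a| |b|]
    · have : b ≤ |b| := le_abs_self b
      linarith [le_max_right |a| |b|]
  -- SLLN for each fixed feature value v
  have key : ∀ v : X, ∀ᵐ ω ∂μ, Tendsto (fun n : ℕ =>
      (∑ j ∈ Finset.range (n + 1), (if x j ω = v then ynoisy j ω else 0))
        / (∑ j ∈ Finset.range (n + 1), (if x j ω = v then (1 : ℝ) else 0)))
      atTop (nhds (f v)) := by
    intro v
    set s : Set Ω := x 0 ⁻¹' {v} with hs_def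
    have hs : MeasurableSet s := (hx 0) (measurableSet_singleton v)
    have hμs : μ s ≠ 0 := hsupp v
    have htpos : 0 < (μ s).toReal :=
      ENNReal.toReal_pos hμs (measure_ne_top μ s)
    set W : ℕ → Ω → ℝ := fun j ω => if x j ω = v then ynoisy j ω else 0 with hW
    set U : ℕ → Ω → ℝ := fun j ω => if x j ω = v then (1 : ℝ) else 0 with hU
    set gW : X × ℝ → ℝ := fun p => if p.1 = v then p.2 else 0 with hgW
    set gU : X × ℝ → ℝ := fun p => if p.1 = v then (1 : ℝ) else 0 with hgU
    have hsetv : MeasurableSet {p : X × ℝ | p.1 = v} :=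
      measurable_fst (measurableSet_singleton v)
    have mgW : Measurable gW := Measurable.ite hsetv measurable_snd measurable_const
    have mgU : Measurable gU := Measurable.ite hsetv measurable_const measurable_const
    have hWc : ∀ j, W j = gW ∘ (fun ω => (x j ω, ynoisy j ω)) := fun j => rfl
    have hUc : ∀ j, U j = gU ∘ (fun ω => (x j ω, ynoisy j ω)) := fun j => rfl
    have idP : ∀ j, IdentDistrib (fun ω => (x j ω, ynoisy j ω))
        (fun ω => (x 0 ω, ynoisy 0 ω)) μ μ :=
      fun j => ⟨(hmeas j).aemeasurable, (hmeas 0).aemeasurable, hident j⟩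
    have pairW : Pairwise (Function.onFun (IndepFun · · μ) W) := by
      intro i j hij
      have := (hindep.indepFun hij).comp mgW mgW
      simpa [Function.onFun, hWc] using this
    have pairU : Pairwise (Function.onFun (IndepFun · · μ) U) := by
      intro i j hij
      have := (hindep.indepFun hij).comp mgU mgU
      simpa [Function.onFun, hUc] using this
    have identW : ∀ j, IdentDistrib (W j) (W 0) μ μ := by
      intro j; rw [hWc j, hWc 0]; exact (idP j).comp mgW
    have identU : ∀ j, IdentDistrib (U j) (U 0) μ μ := by
      intro j; rw [hUc j, hUc 0]; exact (idP j).comp mgU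
    have mW : ∀ j, Measurable (W j) := fun j => mgW.comp (hmeas j)
    have mU : ∀ j, Measurable (U j) := fun j => mgU.comp (hmeas j)
    have intW : Integrable (W 0) μ := by
      refine Integrable.mono' (integrable_const M) (mW 0).aestronglyMeasurable
        (ae_of_all _ fun ω => ?_)
      simp only [hW]
      split_ifs with h
      · exact hbound 0 ω
      · simpa using hMnn
    have intU : Integrable (U 0) μ := by
      refine Integrable.mono' (integrable_const (1 : ℝ)) (mU 0).aestronglyMeasurable
        (ae_of_all _ fun ω => ?_)
      simp only [hU]
      split_ifs <;> simp
    -- compute the expectations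
    have hint_y : Integrable (ynoisy 0) μ := by
      refine Integrable.mono' (integrable_const M) (hy 0).aestronglyMeasurable
        (ae_of_all _ fun ω => hbound 0 ω)
    have hm : MeasurableSpace.comap (x 0) inferInstance ≤ ‹MeasurableSpace Ω› :=
      (hx 0).comap_le
    have hsm : MeasurableSet[MeasurableSpace.comap (x 0) inferInstance] s :=
      ⟨{v}, measurableSet_singleton v, rfl⟩
    have hEW : μ[W 0] = f v * (μ s).toReal := by
      have e1 : (fun ω => W 0 ω) = s.indicator (ynoisy 0) := by
        ext ω
        simp [hW, Set.indicator_apply, hs_def]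
      calc μ[W 0] = ∫ ω in s, ynoisy 0 ω ∂μ := by rw [show W 0 = s.indicator (ynoisy 0) from e1, integral_indicator hs]
        _ = ∫ ω in s, (μ[ynoisy 0 | MeasurableSpace.comap (x 0) inferInstance]) ω ∂μ :=
            (setIntegral_condExp hm hint_y hsm).symm
        _ = ∫ ω in s, f (x 0 ω) ∂μ :=
            setIntegral_congr_ae (hm s hsm) ((hmean 0).mono fun ω h _ => h.symm)
        _ = ∫ _ω in s, f v ∂μ := by
            refine setIntegral_congr_fun (hm s hsm) fun ω hω => ?_
            simp only [hs_def, Set.mem_preimage, Set.mem_singleton_iff] at hω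
            rw [hω]
        _ = f v * (μ s).toReal := by
            rw [setIntegral_const, smul_eq_mul, mul_comm, measureReal_def]
    have hEU : μ[U 0] = (μ s).toReal := by
      have e1 : U 0 = s.indicator (fun _ => (1 : ℝ)) := by
        ext ω
        simp [hU, Set.indicator_apply, hs_def]
      rw [e1, integral_indicator_const _ hs, smul_eq_mul, mul_one, measureReal_def]
    have hWslln := strong_law_ae_real W intW pairW identW
    have hUslln := strong_law_ae_real U intU pairU identU
    filter_upwards [hWslln, hUslln] with ω hWω hUω
    have hWn : Tendsto (fun n : ℕ => (∑ i ∈ Finset.range (n + 1), W i ω) / ((n + 1 : ℕ) : ℝ))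
        atTop (nhds (μ[W 0])) := hWω.comp (tendsto_add_atTop_nat 1)
    have hUn : Tendsto (fun n : ℕ => (∑ i ∈ Finset.range (n + 1), U i ω) / ((n + 1 : ℕ) : ℝ))
        atTop (nhds (μ[U 0])) := hUω.comp (tendsto_add_atTop_nat 1)
    have hUne : μ[U 0] ≠ 0 := by rw [hEU]; exact ne_of_gt htpos
    have hdiv := hWn.div hUn hUne
    have hfinal : Tendsto (fun n : ℕ =>
        (∑ i ∈ Finset.range (n + 1), W i ω) / (∑ i ∈ Finset.range (n + 1), U i ω))
        atTop (nhds (μ[W 0] / μ[U 0])) := by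
      refine hdiv.congr fun n => ?_
      have hc : ((n + 1 : ℕ) : ℝ) ≠ 0 := Nat.cast_ne_zero.mpr (Nat.succ_ne_zero n)
      simp only [Pi.div_apply]
      rw [div_div_div_cancel_right₀ hc]
    have hlim : μ[W 0] / μ[U 0] = f v := by
      rw [hEW, hEU, mul_div_assoc, div_self (ne_of_gt htpos), mul_one]
    rw [hlim] at hfinal
    exact hfinal
  -- combine over all v : almost everywhere convergence
  have hae : ∀ᵐ ω ∂μ, Tendsto (fun n : ℕ =>
      (∑ j ∈ Finset.range (n + 1), (if x j ω = x 0 ω then ynoisy j ω else 0))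
        / (∑ j ∈ Finset.range (n + 1), (if x j ω = x 0 ω then (1 : ℝ) else 0)))
      atTop (nhds (f (x 0 ω))) := by
    filter_upwards [ae_all_iff.mpr key] with ω hω
    exact hω (x 0 ω)
  -- measurability
  have hset : ∀ j, MeasurableSet {ω | x j ω = x 0 ω} := by
    intro j
    have : {ω | x j ω = x 0 ω} = ⋃ v : X, (x j ⁻¹' {v} ∩ x 0 ⁻¹' {v}) := by
      ext ω
      simp only [Set.mem_setOf_eq, Set.mem_iUnion, Set.mem_inter_iff, Set.mem_preimage,
        Set.mem_singleton_iff]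
      constructor
      · intro h; exact ⟨x 0 ω, h, rfl⟩
      · rintro ⟨v, h1, h2⟩; rw [h1, h2]
    rw [this]
    exact MeasurableSet.iUnion fun v =>
      ((hx j) (measurableSet_singleton v)).inter ((hx 0) (measurableSet_singleton v))
  have hmR : ∀ n : ℕ, Measurable (fun ω =>
      (∑ j ∈ Finset.range (n + 1), (if x j ω = x 0 ω then ynoisy j ω else 0))
        / (∑ j ∈ Finset.range (n + 1), (if x j ω = x 0 ω then (1 : ℝ) else 0))) := by
    intro n
    refine Measurable.div ?_ ?_
    · exact Finset.measurable_sum _ fun j _ =>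
        Measurable.ite (hset j) (hy j) measurable_const
    · exact Finset.measurable_sum _ fun j _ =>
        Measurable.ite (hset j) measurable_const measurable_const
  have hmG : Measurable (fun ω => f (x 0 ω)) :=
    (measurable_of_countable f).comp (hx 0)
  have hTIM := tendstoInMeasure_of_tendsto_ae
    (fun n => (hmR n).aestronglyMeasurable) hae
  intro ε hε
  have h := tendstoInMeasure_iff_dist.mp hTIM ε hε
  refine tendsto_of_tendsto_of_tendsto_of_le_of_le tendsto_const_nhds h
    (fun n => zero_le) (fun n => measure_mono ?_)
  intro ω hω
  simp only [Set.mem_setOf_eq] at hω ⊢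
  rw [Real.dist_eq]
  exact le_of_lt hω
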